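/- In the sweep-plane minimum-removal algorithm on an imprecise terrain T, the set of nodes reported as proxies is exactly a set containing precisely one proxy of each imprecise minimum of T; in particular, every reported node is a proxy of some imprecise minimum, and every imprecise minimum has exactly one reported proxy. -/

import Mathlib

open scoped Classical
open Set

/-- An imprecise terrain: a finite geometric graph with nodes in the plane,
each node carrying an elevation interval `[low v, high v]`. -/
structure ImpTerrain (V : Type) [Fintype V] [DecidableEq V] where
  pos : V → ℝ × ℝ
  posInj : Function.Injective pos
  adj : V → V → Prop
  adj_symm : ∀ u v, adj u v → adj v u
  adj_irrefl : ∀ v, ¬ adj v v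
  low : V → ℝ
  high : V → ℝ

namespace ImpTerrain

variable {V : Type} [Fintype V] [DecidableEq V]

/-- A realization assigns to each node an elevation within its interval. -/
def IsRealization (T : ImpTerrain V) (R : V → ℝ) : Prop :=
  ∀ v, T.low v ≤ R v ∧ R v ≤ T.high v

/-- Horizontal (plane) distance between two nodes. -/
noncomputable def hdist (T : ImpTerrain V) (u v : V) : ℝ := dist (T.pos u) (T.pos v)

/-- Slope (steepness of descent) of the edge from `p` to `q` in realization `R`. -/
noncomputable def slope (T : ImpTerrain V) (R : V → ℝ) (p q : V) : ℝ :=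
  (R p - R q) / T.hdist p q

/-- `q` is a steepest-descent neighbor of `p` in `R`. -/
def SDN (T : ImpTerrain V) (R : V → ℝ) (p q : V) : Prop :=
  T.adj p q ∧ 0 ≤ T.slope R p q ∧ ∀ r, T.adj p r → T.slope R p r ≤ T.slope R p q

/-- The neighborhood of a set of nodes. -/
def Nbhd (T : ImpTerrain V) (P : Set V) : Set V :=
  {s | s ∉ P ∧ ∃ t ∈ P, T.adj s t}

/-- `u` and `v` are connected by a path staying inside `P`. -/
def ConnIn (T : ImpTerrain V) (P : Set V) (u v : V) : Prop :=
  Relation.ReflTransGen (fun a b => T.adj a b ∧ a ∈ P ∧ b ∈ P) u v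

/-- `P` is a local minimum in realization `R`: nonempty, connected, all nodes at
the same elevation, strictly below its neighborhood. -/
def LocalMin (T : ImpTerrain V) (R : V → ℝ) (P : Set V) : Prop :=
  P.Nonempty ∧ (∀ u ∈ P, ∀ v ∈ P, T.ConnIn P u v) ∧
    (∀ u ∈ P, ∀ v ∈ P, R u = R v) ∧ (∀ u ∈ P, ∀ t ∈ T.Nbhd P, R u < R t)

def InLocalMin (T : ImpTerrain V) (R : V → ℝ) (p : V) : Prop :=
  ∃ P, T.LocalMin R P ∧ p ∈ P

/-- One step of discrete water flow. -/
def FlowStep (T : ImpTerrain V) (R : V → ℝ) (p q : V) : Prop :=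
  (∃ P, T.LocalMin R P ∧ p ∈ P ∧ q ∈ P ∧ T.adj p q) ∨
    (¬ T.InLocalMin R p ∧ T.SDN R p q)

/-- `p ⇝_R q` : water from `p` reaches `q` in realization `R`. -/
def FlowsTo (T : ImpTerrain V) (R : V → ℝ) : V → V → Prop :=
  Relation.ReflTransGen (T.FlowStep R)

/-- The (discrete) watershed of a set of nodes `Q` in realization `R`. -/
def WS (T : ImpTerrain V) (R : V → ℝ) (Q : Set V) : Set V :=
  {p | ∃ q ∈ Q, T.FlowsTo R p q}

/-- The potential watershed of `Q`. -/
def PoWS (T : ImpTerrain V) (Q : Set V) : Set V :=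
  {p | ∃ R, T.IsRealization R ∧ p ∈ T.WS R Q}

/-- A flow path: a simple path following steepest-descent edges that ends in,
and visits all nodes of, a local minimum. -/
def IsFlowPath (T : ImpTerrain V) (R : V → ℝ) (L : List V) : Prop :=
  L.Nodup ∧ L.Chain' (fun p q => T.SDN R p q) ∧
    ∃ P, T.LocalMin R P ∧ (∀ v ∈ P, v ∈ L) ∧ ∃ hne : L ≠ [], L.getLast hne ∈ P

/-- The `Q`-avoiding potential watershed of `S`: nodes having, in some
realization, a flow path to a node of `S` whose portion up to that node
avoids `Q`. -/
def AvWS (T : ImpTerrain V) (Q S : Set V) : Set V :=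
  {p | ∃ R, T.IsRealization R ∧ ∃ L, T.IsFlowPath R L ∧ ∃ s ∈ S,
    ∃ i j : Fin L.length, (i : ℕ) ≤ (j : ℕ) ∧ L.get i = p ∧ L.get j = s ∧
      ∀ k : Fin L.length, (i : ℕ) ≤ (k : ℕ) → (k : ℕ) ≤ (j : ℕ) → L.get k ∉ Q}

/-- The persistent watershed of `Q`. -/
def PsWS (T : ImpTerrain V) (Q : Set V) : Set V :=
  (T.AvWS Q (T.PoWS Q)ᶜ)ᶜ

/-- The core watershed of `Q`: nodes from which every induced flow path leads
to a node of `Q`. -/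
def CoWS (T : ImpTerrain V) (Q : Set V) : Set V :=
  {p | ∀ R, T.IsRealization R → ∀ L, T.IsFlowPath R L →
    ∀ i : Fin L.length, L.get i = p →
      ∃ q ∈ Q, ∃ j : Fin L.length, (i : ℕ) ≤ (j : ℕ) ∧ L.get j = q}

/-- Union of all node sets disjoint from `Q` that form a local minimum in some
realization. -/
def Vmin (T : ImpTerrain V) (Q : Set V) : Set V :=
  ⋃₀ {r | r ∩ Q = ∅ ∧ ∃ R, T.IsRealization R ∧ T.LocalMin R r}

/-- `S` contains a local minimum in every realization. -/
def AlwaysMin (T : ImpTerrain V) (S : Set V) : Prop :=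
  ∀ R, T.IsRealization R → ∃ P, T.LocalMin R P ∧ P ⊆ S

/-- An imprecise minimum: a minimal set containing a local minimum in every
realization. -/
def ImpreciseMin (T : ImpTerrain V) (S : Set V) : Prop :=
  T.AlwaysMin S ∧ ∀ S', S' ⊂ S → ¬ T.AlwaysMin S'

/-- A terrain is regular if every local minimum of the lowermost realization is
an imprecise minimum. -/
def Regular (T : ImpTerrain V) : Prop :=
  ∀ P, T.LocalMin T.low P → T.ImpreciseMin P

/-- A proxy of `S`: a node of `S` from which water can never reach a node
outside `S` in any realization. -/
def IsProxy (T : ImpTerrain V) (S : Set V) (p : V) : Prop :=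
  p ∈ S ∧ ∀ R, T.IsRealization R → ∀ q, q ∉ S → ¬ T.FlowsTo R p q

/-- `R'` is an `ε`-perturbation of `R`. -/
def Perturb (ε : ℝ) (R R' : V → ℝ) : Prop := ∀ v, |R' v - R v| ≤ ε

/-- `S` together with all `ε`-perturbations of its members (`S^ε`). -/
def Enlarge (S : Set (V → ℝ)) (ε : ℝ) : Set (V → ℝ) :=
  S ∪ {R' | ∃ R ∈ S, Perturb ε R R'}

/-- `Π(S)` : flow paths induced by realizations in `S`. -/
def FlowPathsOf (T : ImpTerrain V) (S : Set (V → ℝ)) : Set (List V) :=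
  {L | ∃ R ∈ S, T.IsFlowPath R L}

/-- A flow path is stable with respect to `S`. -/
def StableWrt (T : ImpTerrain V) (S : Set (V → ℝ)) (L : List V) : Prop :=
  ∃ ε > (0 : ℝ), ∃ R ∈ S, ∀ R', Perturb ε R R' → T.IsFlowPath R' L

/-- State of the sweep-plane minimum-removal algorithm. -/
structure SweepState (V : Type) where
  discovered : Set V
  final : V → Option ℝ
  proxies : Set V

def pendingS (st : SweepState V) (v : V) : Prop :=
  v ∈ st.discovered ∧ st.final v = none

/-- Pending component of `v`. -/
def pendComp (T : ImpTerrain V) (st : SweepState V) (v : V) : Set V :=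
  {u | Relation.ReflTransGen (fun a b => T.adj a b ∧ pendingS st a ∧ pendingS st b) v u}

/-- One step of the sweep algorithm, processing a `low` event `(v, false)` or a
`high` event `(v, true)`. -/
noncomputable def sweepStep (T : ImpTerrain V) (st : SweepState V) : V × Bool → SweepState V
  | (v, false) =>
    let st1 : SweepState V := ⟨insert v st.discovered, st.final, st.proxies⟩
    if ∃ u, T.adj v u ∧ (st.final u).isSome = true then
      ⟨st1.discovered,
        fun w => if w ∈ T.pendComp st1 v then some (T.low v) else st.final w,
        st.proxies⟩
    else st1
  | (v, true) =>
    if (st.final v).isSome = true then st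
    else
      ⟨st.discovered,
        fun w =>
          if w ∈ T.pendComp st v then some (sSup (T.low '' T.pendComp st v))
          else st.final w,
        insert v st.proxies⟩

noncomputable def sweepRun (T : ImpTerrain V) (evs : List (V × Bool)) : SweepState V :=
  evs.foldl T.sweepStep ⟨∅, fun _ => none, ∅⟩

/-- Elevation key of an event. -/
def eKey (T : ImpTerrain V) : V × Bool → ℝ
  | (v, false) => T.low v
  | (v, true) => T.high v

/-- A valid event list: all events, each once, sorted by elevation with low
events before high events at equal elevation. -/
def ValidEventList (T : ImpTerrain V) (evs : List (V × Bool)) : Prop :=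
  (∀ v : V, ∀ b : Bool, (v, b) ∈ evs) ∧ evs.Nodup ∧
    evs.Pairwise (fun e1 e2 =>
      T.eKey e1 < T.eKey e2 ∨ (T.eKey e1 = T.eKey e2 ∧ ¬(e1.2 = true ∧ e2.2 = false)))

/-- The realization `M` computed by the sweep algorithm. -/
noncomputable def sweepM (T : ImpTerrain V) (evs : List (V × Bool)) : V → ℝ :=
  fun v => ((T.sweepRun evs).final v).getD (T.high v)

end ImpTerrain
section Lemmas1
namespace ImpTerrain
variable {V : Type} [Fintype V] [DecidableEq V] (T : ImpTerrain V)

/-- Connected component of `v` among nodes with `low ≤ t`. -/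
def comp (t : ℝ) (v : V) : Set V :=
  {w | Relation.ReflTransGen (fun a b => T.adj a b ∧ T.low a ≤ t ∧ T.low b ≤ t) v w}

variable {T}

lemma comp_refl (t : ℝ) (v : V) : v ∈ T.comp t v := Relation.ReflTransGen.refl

lemma comp_low {t : ℝ} {v w : V} (hv : T.low v ≤ t) (hw : w ∈ T.comp t v) : T.low w ≤ t := by
  induction hw with
  | refl => exact hv
  | tail _ h ih => exact h.2.2

lemma rtgSymmetric {α : Type*} {r : α → α → Prop} (h : Symmetric r) :
    Symmetric (Relation.ReflTransGen r) := by
  intro x y hxy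
  induction hxy with
  | refl => exact Relation.ReflTransGen.refl
  | tail _ b c => exact c.head (h b)

lemma comp_symm {t : ℝ} {v w : V} (hw : w ∈ T.comp t v) : v ∈ T.comp t w := by
  refine rtgSymmetric ?_ hw
  intro a b h
  exact ⟨T.adj_symm a b h.1, h.2.2, h.2.1⟩

lemma comp_trans {t : ℝ} {v w x : V} (hw : w ∈ T.comp t v) (hx : x ∈ T.comp t w) :
    x ∈ T.comp t v := Relation.ReflTransGen.trans hw hx

lemma comp_mono {t t' : ℝ} (h : t ≤ t') {v w : V} (hw : w ∈ T.comp t v) : w ∈ T.comp t' v := by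
  induction hw with
  | refl => exact Relation.ReflTransGen.refl
  | tail _ hs ih => exact ih.tail ⟨hs.1, hs.2.1.trans h, hs.2.2.trans h⟩

/-- Extension: a neighbour of a component member with small low is in the component. -/
lemma comp_ext {t : ℝ} {v w u : V} (hv : T.low v ≤ t) (hw : w ∈ T.comp t v)
    (hadj : T.adj w u) (hu : T.low u ≤ t) : u ∈ T.comp t v :=
  hw.tail ⟨hadj, comp_low hv hw, hu⟩

/-- Boundary of a component: a neighbour outside has `low > t`. -/
lemma comp_boundary {t : ℝ} {v w u : V} (hv : T.low v ≤ t) (hw : w ∈ T.comp t v)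
    (hadj : T.adj w u) (hu : u ∉ T.comp t v) : t < T.low u := by
  by_contra h
  exact hu (comp_ext hv hw hadj (le_of_not_gt h))

/-- First exit of a reflexive-transitive path from a set. -/
lemma rtg_exit {r : V → V → Prop} {P : Set V} {a c : V}
    (h : Relation.ReflTransGen r a c) (ha : a ∈ P) (hc : c ∉ P) :
    ∃ x ∈ P, ∃ y, y ∉ P ∧ r x y := by
  induction h with
  | refl => exact absurd ha hc
  | @tail b c hab hbc ih =>
    by_cases hb : b ∈ P
    · exact ⟨b, hb, c, hc, hbc⟩
    · exact ih hb

lemma hdist_pos {p q : V} (h : T.adj p q) : 0 < T.hdist p q := by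
  have hne : p ≠ q := by rintro rfl; exact T.adj_irrefl p h
  have : T.pos p ≠ T.pos q := fun he => hne (T.posInj he)
  exact dist_pos.2 this

lemma SDN.le {R : V → ℝ} {p q : V} (h : T.SDN R p q) : R q ≤ R p := by
  have hd := hdist_pos h.1
  have := h.2.1
  rw [ImpTerrain.slope, le_div_iff₀ hd] at this
  linarith

/-- A flow step does not increase elevation and cannot leave a component from
inside below the boundary. -/
lemma flowsTo_stay {R : V → ℝ} {t : ℝ} {v : V} (hR : T.IsRealization R)
    (hvt : T.low v ≤ t) (hRv : R v ≤ t) {q : V} (h : T.FlowsTo R v q) :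
    q ∈ T.comp t v ∧ R q ≤ R v := by
  induction h with
  | refl => exact ⟨comp_refl t v, le_refl _⟩
  | @tail b c hab hbc ih =>
    rcases ih with ⟨hbC, hRb⟩
    have step : T.adj b c ∧ R c ≤ R b := by
      rcases hbc with ⟨P, hP, hbP, hcP, hadj⟩ | ⟨_, hsdn⟩
      · exact ⟨hadj, le_of_eq (hP.2.2.1 c hcP b hbP)⟩
      · exact ⟨hsdn.1, hsdn.le⟩
    refine ⟨?_, step.2.trans hRb⟩
    by_contra hcC
    have hlt := comp_boundary hvt hbC step.1 hcC
    have h1 : T.low c ≤ R c := (hR c).1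
    linarith [step.2, hRb, hRv]

/-- In any realization, descending from `v` one finds a local minimum inside
`comp T t v`, provided `R v ≤ t`. -/
lemma localMin_in_comp {R : V → ℝ} {t : ℝ} {v : V} (hR : T.IsRealization R)
    (hvt : T.low v ≤ t) (hRv : R v ≤ t) :
    ∃ P, T.LocalMin R P ∧ P ⊆ T.comp t v := by
  classical
  set A : Set V := {w | Relation.ReflTransGen (fun a b => T.adj a b ∧ R b ≤ R a) v w} with hA
  have hAv : v ∈ A := Relation.ReflTransGen.refl
  have hAsub : ∀ w ∈ A, w ∈ T.comp t v ∧ R w ≤ R v := by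
    intro w hw
    induction hw with
    | refl => exact ⟨comp_refl t v, le_refl _⟩
    | @tail b c hab hbc ih =>
      rcases ih with ⟨hbC, hRb⟩
      refine ⟨?_, hbc.2.trans hRb⟩
      by_contra hcC
      have hlt := comp_boundary hvt hbC hbc.1 hcC
      have h1 : T.low c ≤ R c := (hR c).1
      linarith [hbc.2, hRb, hRv]
  obtain ⟨p, hpA, hpmin⟩ := Set.exists_min_image A R A.toFinite ⟨v, hAv⟩
  set m := R p with hm
  set P : Set V := {w | Relation.ReflTransGen (fun a b => T.adj a b ∧ R a = m ∧ R b = m) p w} with hP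
  have hPA : ∀ w ∈ P, w ∈ A := by
    intro w hw
    induction hw with
    | refl => exact hpA
    | @tail b c hab hbc ih =>
      exact Relation.ReflTransGen.tail ih ⟨hbc.1, by rw [hbc.2.2, hbc.2.1]⟩
  have hPval : ∀ w ∈ P, R w = m := by
    intro w hw
    induction hw with
    | refl => rfl
    | tail _ h ih => exact h.2.2
  have hPp : p ∈ P := Relation.ReflTransGen.refl
  -- neighbours of P are strictly higher
  have hNb : ∀ w ∈ P, ∀ u, T.adj w u → u ∉ P → m < R u := by
    intro w hw u hadj hu
    by_contra hle
    push_neg at hle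
    have huA : u ∈ A := Relation.ReflTransGen.tail (hPA w hw)
      ⟨hadj, by rw [hPval w hw]; exact hle⟩
    have h1 : m ≤ R u := hpmin u huA
    have h2 : R u = m := le_antisymm hle h1
    exact hu (Relation.ReflTransGen.tail hw ⟨hadj, hPval w hw, h2⟩)
  refine ⟨P, ⟨⟨p, hPp⟩, ?_, ?_, ?_⟩, fun w hw => (hAsub w (hPA w hw)).1⟩
  · -- connectivity within P
    have key : ∀ w ∈ P, T.ConnIn P p w := by
      intro w hw
      induction hw with
      | refl => exact Relation.ReflTransGen.refl
      | @tail b c hab hbc ih =>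
        have hbP : b ∈ P := hab
        have hcP : c ∈ P := Relation.ReflTransGen.tail hab hbc
        exact Relation.ReflTransGen.tail ih ⟨hbc.1, hbP, hcP⟩
    intro u hu w hw
    have h1 : T.ConnIn P u p := by
      have := key u hu
      exact rtgSymmetric
        (fun a b h => ⟨T.adj_symm a b h.1, h.2.2, h.2.1⟩) this
    exact h1.trans (key w hw)
  · intro u hu w hw
    rw [hPval u hu, hPval w hw]
  · intro u hu s hs
    rcases hs with ⟨hsP, w, hwP, hadj⟩
    have := hNb w hwP s (T.adj_symm s w hadj) hsP
    rw [hPval u hu]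
    exact this

end ImpTerrain
end Lemmas1
section Lemmas2
namespace ImpTerrain
variable {V : Type} [Fintype V] [DecidableEq V] {T : ImpTerrain V}

/-- `v` is a proxy of its component at threshold `high v`. -/
lemma isProxy_comp (hle : ∀ v, T.low v ≤ T.high v) (v : V) :
    T.IsProxy (T.comp (T.high v) v) v := by
  refine ⟨comp_refl _ _, ?_⟩
  intro R hR q hq hflow
  exact hq (flowsTo_stay hR (hle v) (hR v).2 hflow).1

/-- The component at threshold `high v` always contains a local minimum. -/
lemma alwaysMin_comp (hle : ∀ v, T.low v ≤ T.high v) (v : V) :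
    T.AlwaysMin (T.comp (T.high v) v) := by
  intro R hR
  exact localMin_in_comp hR (hle v) (hR v).2

/-- If all highs in the component dominate `high v`, the component is minimal. -/
lemma min_comp (hle : ∀ v, T.low v ≤ T.high v) (v : V)
    (hhigh : ∀ w ∈ T.comp (T.high v) v, T.high v ≤ T.high w) :
    ∀ S', S' ⊂ T.comp (T.high v) v → ¬ T.AlwaysMin S' := by
  intro S' hS' hAM
  set C := T.comp (T.high v) v with hC
  classical
  set R : V → ℝ := fun w => if w ∈ C then T.high v else T.low w with hRdef
  have hR : T.IsRealization R := by
    intro w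
    by_cases hw : w ∈ C
    · simp only [hRdef, if_pos hw]
      exact ⟨comp_low (hle v) hw, hhigh w hw⟩
    · simp only [hRdef, if_neg hw]
      exact ⟨le_refl _, hle w⟩
  obtain ⟨P, hP, hPS⟩ := hAM R hR
  have hPC : P ⊆ C := hPS.trans hS'.1
  -- there is an edge from P to C \ P
  obtain ⟨x, hxC, hxP⟩ : ∃ x ∈ C, x ∉ P := by
    obtain ⟨x, hx1, hx2⟩ := Set.exists_of_ssubset hS'
    exact ⟨x, hx1, fun h => hx2 (hPS h)⟩
  obtain ⟨p₀, hp₀⟩ := hP.1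
  have hpath : p₀ ∈ T.comp (T.high v) x := comp_trans (comp_symm hxC) (hPC hp₀)
  obtain ⟨a, haP, b, hbP, hr⟩ := rtg_exit
      (rtgSymmetric
        (fun a b h => ⟨T.adj_symm a b h.1, h.2.2, h.2.1⟩) hpath)
      hp₀ hxP
  have hbC : b ∈ C := comp_trans (hPC haP) (Relation.ReflTransGen.single hr)
  have hbN : b ∈ T.Nbhd P := ⟨hbP, a, haP, T.adj_symm a b hr.1⟩
  have := hP.2.2.2 a haP b hbN
  rw [hRdef] at this
  simp only [if_pos (hPC haP), if_pos hbC] at this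
  exact lt_irrefl _ this

lemma impreciseMin_comp (hle : ∀ v, T.low v ≤ T.high v) (v : V)
    (hhigh : ∀ w ∈ T.comp (T.high v) v, T.high v ≤ T.high w) :
    T.ImpreciseMin (T.comp (T.high v) v) :=
  ⟨alwaysMin_comp hle v, min_comp hle v hhigh⟩

end ImpTerrain
end Lemmas2
section Lemmas3
namespace ImpTerrain
variable {V : Type} [Fintype V] [DecidableEq V]

/-- Well-formed batch list: each batch is either a reported component or drains
into a strictly older batch of value at most its own. -/
def GoodBatches (T : ImpTerrain V) (prox : Set V) : List (Set V × ℝ) → Prop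
  | [] => True
  | b :: rest => ((∃ v ∈ prox, b.1 = T.comp (T.high v) v) ∨
      (∃ u w, u ∉ b.1 ∧ w ∈ b.1 ∧ T.adj u w ∧ ∃ b' ∈ rest, u ∈ b'.1 ∧ b'.2 ≤ b.2)) ∧
      GoodBatches T prox rest

variable {T : ImpTerrain V}

lemma GoodBatches.mono {prox prox' : Set V} (h : prox ⊆ prox') :
    ∀ {Bs : List (Set V × ℝ)}, GoodBatches T prox Bs → GoodBatches T prox' Bs
  | [], _ => trivial
  | b :: rest, ⟨hhead, htail⟩ => by
    refine ⟨?_, GoodBatches.mono h htail⟩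
    rcases hhead with ⟨v, hv, he⟩ | hd
    · exact Or.inl ⟨v, h hv, he⟩
    · exact Or.inr hd

/-- A connected constant-elevation set meeting a local minimum is contained in it. -/
lemma plateau_subset {R : V → ℝ} {P : Set V} (hP : T.LocalMin R P) {B : Set V} {x : ℝ}
    (hval : ∀ w ∈ B, R w = x)
    (hconn : ∃ c ∈ B, ∀ w ∈ B, Relation.ReflTransGen
      (fun a b => T.adj a b ∧ a ∈ B ∧ b ∈ B) c w)
    {p : V} (hpB : p ∈ B) (hpP : p ∈ P) : B ⊆ P := by
  obtain ⟨c, hcB, hc⟩ := hconn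
  have hsym : Symmetric (fun a b => T.adj a b ∧ a ∈ B ∧ b ∈ B) :=
    fun a b h => ⟨T.adj_symm a b h.1, h.2.2, h.2.1⟩
  have hclose : ∀ {a w : V}, Relation.ReflTransGen
      (fun a b => T.adj a b ∧ a ∈ B ∧ b ∈ B) a w → a ∈ P → w ∈ P := by
    intro a w hw haP
    induction hw with
    | refl => exact haP
    | @tail b e hab hbe ih =>
      by_contra heP
      have hbP : b ∈ P := ih
      have hN : e ∈ T.Nbhd P := ⟨heP, b, hbP, T.adj_symm b e hbe.1⟩
      have := hP.2.2.2 b hbP e hN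
      rw [hval b hbe.2.1, hval e hbe.2.2] at this
      exact lt_irrefl _ this
  intro w hw
  exact hclose ((rtgSymmetric hsym (hc p hpB)).trans (hc w hw)) hpP

/-- Descending through batches from a local minimum reaches a reported component. -/
lemma batch_descent {M : V → ℝ} {prox : Set V} :
    ∀ (Bs : List (Set V × ℝ)), GoodBatches T prox Bs →
      (∀ b ∈ Bs, ∀ w ∈ b.1, M w = b.2) →
      (∀ b ∈ Bs, ∃ c ∈ b.1, ∀ w ∈ b.1, Relation.ReflTransGen
        (fun a b' => T.adj a b' ∧ a ∈ b.1 ∧ b' ∈ b.1) c w) →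
      ∀ P, T.LocalMin M P → (∃ b ∈ Bs, ∃ p ∈ b.1, p ∈ P) →
      ∃ v ∈ prox, T.comp (T.high v) v ⊆ P
  | [], _, _, _, P, _, ⟨b, hb, _⟩ => absurd hb (List.not_mem_nil)
  | b :: rest, ⟨hhead, htail⟩, hval, hconn, P, hP, ⟨b', hb', p, hpb, hpP⟩ => by
    have ihval : ∀ b ∈ rest, ∀ w ∈ b.1, M w = b.2 :=
      fun b hb => hval b (List.mem_cons_of_mem _ hb)
    have ihconn := fun b hb => hconn b (List.mem_cons_of_mem _ hb)
    rcases List.mem_cons.1 hb' with rfl | hmem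
    · -- witness in the head batch
      have hBsub : b'.1 ⊆ P :=
        plateau_subset hP (hval b' (List.mem_cons_self)) (hconn b' (List.mem_cons_self))
          hpb hpP
      rcases hhead with ⟨v, hv, he⟩ | ⟨u, w₀, huB, hw₀B, hadj, bb, hbb, hubb, hble⟩
      · exact ⟨v, hv, he ▸ hBsub⟩
      · -- drain case: u is in an older batch, at most as high; u must be in P
        have hMu : M u = bb.2 := ihval bb hbb u hubb
        have hMw₀ : M w₀ = b'.2 := hval b' (List.mem_cons_self) w₀ hw₀B
        have huP : u ∈ P := by
          by_contra huP
          have hN : u ∈ T.Nbhd P := ⟨huP, w₀, hBsub hw₀B, hadj⟩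
          have := hP.2.2.2 w₀ (hBsub hw₀B) u hN
          rw [hMu, hMw₀] at this
          exact absurd hble (not_le.2 this)
        exact batch_descent rest htail ihval ihconn P hP ⟨bb, hbb, u, hubb, huP⟩
    · exact batch_descent rest htail ihval ihconn P hP ⟨b', hmem, p, hpb, hpP⟩

end ImpTerrain
end Lemmas3
section Lemmas4a
namespace ImpTerrain
variable {V : Type} [Fintype V] [DecidableEq V] {T : ImpTerrain V}

lemma pend_mem {st : SweepState V} {v : V} (hv : pendingS st v) :
    ∀ w ∈ T.pendComp st v, pendingS st w := by
  intro w hw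
  induction hw with
  | refl => exact hv
  | tail _ h ih => exact h.2.2

lemma pendComp_conn {st : SweepState V} {v : V} :
    ∀ w ∈ T.pendComp st v, Relation.ReflTransGen
      (fun a b => T.adj a b ∧ a ∈ T.pendComp st v ∧ b ∈ T.pendComp st v) v w := by
  intro w hw
  induction hw with
  | refl => exact Relation.ReflTransGen.refl
  | @tail b c hab hbc ih =>
    exact Relation.ReflTransGen.tail ih ⟨hbc.1, hab, Relation.ReflTransGen.tail hab hbc⟩

/-- The event ordering used in `ValidEventList`. -/
def Ord (T : ImpTerrain V) (e1 e2 : V × Bool) : Prop :=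
  T.eKey e1 < T.eKey e2 ∨ (T.eKey e1 = T.eKey e2 ∧ ¬(e1.2 = true ∧ e2.2 = false))

lemma Ord.key_le {e1 e2 : V × Bool} (h : Ord T e1 e2) : T.eKey e1 ≤ T.eKey e2 := by
  rcases h with h | h
  · exact le_of_lt h
  · exact le_of_eq h.1

lemma Ord.TF {v w : V} (h : Ord T (v, true) (w, false)) : T.high v < T.low w := by
  rcases h with h | h
  · exact h
  · exact absurd ⟨rfl, rfl⟩ h.2

/-- Extraction of order and uniqueness facts at a split of a valid event list. -/
lemma split_facts {evs p rest : List (V × Bool)} {e : V × Bool}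
    (hevs : T.ValidEventList evs) (hsplit : evs = p ++ e :: rest) :
    (∀ e' ∈ p, Ord T e' e) ∧ (∀ e'' ∈ rest, Ord T e e'') ∧ e ∉ p ∧
      (∀ a : V, ∀ b : Bool, (a, b) ∈ p ∨ (a, b) = e ∨ (a, b) ∈ rest) := by
  obtain ⟨hall, hnd, hpw⟩ := hevs
  rw [hsplit] at hall hnd hpw
  rw [List.pairwise_append] at hpw
  obtain ⟨_, hpw2, hcross⟩ := hpw
  rw [List.pairwise_cons] at hpw2
  refine ⟨fun e' he' => hcross e' he' e (List.mem_cons_self),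
    fun e'' he'' => hpw2.1 e'' he'', ?_, ?_⟩
  · rw [List.nodup_append] at hnd
    intro hep
    exact hnd.2.2 e hep e (List.mem_cons_self) rfl
  · intro a b
    have := hall a b
    rw [List.mem_append, List.mem_cons] at this
    tauto

end ImpTerrain
end Lemmas4a
section Lemmas4b
namespace ImpTerrain
variable {V : Type} [Fintype V] [DecidableEq V]

/-- The sweep invariant. `p` is the processed prefix, `rest` the remaining events. -/
structure Inv (T : ImpTerrain V) (p rest : List (V × Bool)) (st : SweepState V) : Prop where
  disc : ∀ w, w ∈ st.discovered ↔ (w, false) ∈ p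
  finb : ∀ w x, st.final w = some x → w ∈ st.discovered ∧ T.low w ≤ x ∧ x ≤ T.high w
  finfut : ∀ w x, st.final w = some x → ∀ e' ∈ rest, x ≤ T.eKey e'
  proxmem : ∀ u ∈ st.proxies, (u, true) ∈ p
  highdone : ∀ w, (w, true) ∈ p → (st.final w).isSome = true
  nopf : ∀ a b, T.adj a b → pendingS st a → (st.final b).isSome = true → False
  proxhigh : ∀ v ∈ st.proxies, ∀ w ∈ T.comp (T.high v) v, T.high v ≤ T.high w
  proxuniq : ∀ v ∈ st.proxies, ∀ u ∈ st.proxies, u ∈ T.comp (T.high v) v → u = v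
  batches : ∃ Bs : List (Set V × ℝ),
    (∀ w, (st.final w).isSome = true ↔ ∃ b ∈ Bs, w ∈ b.1) ∧
    (∀ b ∈ Bs, ∀ w ∈ b.1, st.final w = some b.2) ∧
    (∀ b ∈ Bs, ∃ c ∈ b.1, ∀ w ∈ b.1, Relation.ReflTransGen
      (fun a b' => T.adj a b' ∧ a ∈ b.1 ∧ b' ∈ b.1) c w) ∧
    GoodBatches T st.proxies Bs

variable {T : ImpTerrain V}

lemma inv_low_quiet {p rest : List (V × Bool)} {st : SweepState V} {v : V}
    (hinv : Inv T p ((v, false) :: rest) st)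
    (hnotp : (v, false) ∉ p)
    (hbr : ¬ ∃ u, T.adj v u ∧ (st.final u).isSome = true) :
    Inv T (p ++ [(v, false)]) rest (T.sweepStep st (v, false)) := by
  have hstep : T.sweepStep st (v, false) = ⟨insert v st.discovered, st.final, st.proxies⟩ := by
    simp only [sweepStep]; rw [if_neg hbr]
  rw [hstep]
  refine ⟨?_, ?_, ?_, ?_, ?_, ?_, hinv.proxhigh, hinv.proxuniq, ?_⟩
  · intro w
    simp only [Set.mem_insert_iff, List.mem_append, List.mem_singleton, Prod.mk.injEq,
      and_true, hinv.disc w]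
    tauto
  · intro w x hw
    obtain ⟨h1, h2⟩ := hinv.finb w x hw
    exact ⟨Set.mem_insert_of_mem _ h1, h2⟩
  · intro w x hw e' he'
    exact hinv.finfut w x hw e' (List.mem_cons_of_mem _ he')
  · intro u hu
    exact List.mem_append_left _ (hinv.proxmem u hu)
  · intro w hw
    rcases List.mem_append.1 hw with hw | hw
    · exact hinv.highdone w hw
    · simp at hw
  · intro a b hadj ⟨ha1, ha2⟩ hb
    simp only [Set.mem_insert_iff] at ha1
    rcases ha1 with rfl | ha1
    · exact hbr ⟨b, hadj, hb⟩
    · exact hinv.nopf a b hadj ⟨ha1, ha2⟩ hb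
  · exact hinv.batches

lemma inv_high_skip {p rest : List (V × Bool)} {st : SweepState V} {v : V}
    (hinv : Inv T p ((v, true) :: rest) st)
    (hbr : (st.final v).isSome = true) :
    Inv T (p ++ [(v, true)]) rest (T.sweepStep st (v, true)) := by
  have hstep : T.sweepStep st (v, true) = st := by
    simp only [sweepStep]; rw [if_pos hbr]
  rw [hstep]
  refine ⟨?_, hinv.finb, ?_, ?_, ?_, hinv.nopf, hinv.proxhigh, hinv.proxuniq, hinv.batches⟩
  · intro w
    rw [hinv.disc w]
    simp
  · intro w x hw e' he'
    exact hinv.finfut w x hw e' (List.mem_cons_of_mem _ he')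
  · intro u hu
    exact List.mem_append_left _ (hinv.proxmem u hu)
  · intro w hw
    rcases List.mem_append.1 hw with hw | hw
    · exact hinv.highdone w hw
    · simp only [List.mem_singleton, Prod.mk.injEq, and_true] at hw
      subst hw
      exact hbr

end ImpTerrain
end Lemmas4b
section Lemmas4c
namespace ImpTerrain
variable {V : Type} [Fintype V] [DecidableEq V] {T : ImpTerrain V}

lemma inv_low_drain (hle : ∀ v, T.low v ≤ T.high v)
    {p rest : List (V × Bool)} {st : SweepState V} {v : V}
    (hinv : Inv T p ((v, false) :: rest) st)
    (hpe : ∀ e' ∈ p, Ord T e' (v, false))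
    (her : ∀ e'' ∈ rest, Ord T (v, false) e'')
    (hnotp : (v, false) ∉ p)
    (hall : ∀ a : V, ∀ b : Bool, (a, b) ∈ p ∨ (a, b) = (v, false) ∨ (a, b) ∈ rest)
    (hbr : ∃ u, T.adj v u ∧ (st.final u).isSome = true) :
    Inv T (p ++ [(v, false)]) rest (T.sweepStep st (v, false)) := by
  set st1 : SweepState V := ⟨insert v st.discovered, st.final, st.proxies⟩ with hst1
  set pc := T.pendComp st1 v with hpc
  set F : V → Option ℝ := fun w => if w ∈ pc then some (T.low v) else st.final w with hF
  have hstep : T.sweepStep st (v, false) = ⟨st1.discovered, F, st.proxies⟩ := by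
    simp only [sweepStep]; rw [if_pos hbr]
  rw [hstep]
  -- basic facts
  have hvnd : v ∉ st.discovered := fun h => hnotp ((hinv.disc v).1 h)
  have hvnone : st.final v = none := by
    cases hfv : st.final v with
    | none => rfl
    | some x => exact absurd ((hinv.finb v x hfv).1) hvnd
  have hpendv : pendingS st1 v := ⟨Set.mem_insert _ _, hvnone⟩
  have hpend : ∀ w ∈ pc, pendingS st1 w := pend_mem hpendv
  have hdisc1 : ∀ w ∈ pc, w = v ∨ w ∈ st.discovered := by
    intro w hw
    rcases Set.mem_insert_iff.1 (hpend w hw).1 with h | h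
    · exact Or.inl h
    · exact Or.inr h
  have hlow_le : ∀ w ∈ pc, T.low w ≤ T.low v := by
    intro w hw
    rcases hdisc1 w hw with rfl | h
    · exact le_refl _
    · exact (hpe (w, false) ((hinv.disc w).1 h)).key_le
  have hle_high : ∀ w ∈ pc, T.low v ≤ T.high w := by
    intro w hw
    rcases hdisc1 w hw with rfl | h
    · exact hle _
    · have hnone : st.final w = none := (hpend w hw).2
      have hT : (w, true) ∉ p := by
        intro hT
        have := hinv.highdone w hT
        rw [hnone] at this
        simp at this
      rcases hall w true with h' | h' | h'
      · exact absurd h' hT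
      · simp at h'
      · exact (her (w, true) h').key_le
  have hFpc : ∀ w ∈ pc, F w = some (T.low v) := fun w hw => if_pos hw
  have hFnot : ∀ w, w ∉ pc → F w = st.final w := fun w hw => if_neg hw
  have holdnot : ∀ w x, st.final w = some x → w ∉ pc := by
    intro w x hw hwpc
    rw [(hpend w hwpc).2] at hw
    exact nomatch hw
  refine ⟨?_, ?_, ?_, ?_, ?_, ?_, hinv.proxhigh, hinv.proxuniq, ?_⟩
  · intro w
    show w ∈ insert v st.discovered ↔ _
    simp only [Set.mem_insert_iff, List.mem_append, List.mem_singleton, Prod.mk.injEq,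
      and_true, hinv.disc w]
    tauto
  · intro w x hw
    replace hw : F w = some x := hw
    show w ∈ insert v st.discovered ∧ _
    by_cases hwpc : w ∈ pc
    · rw [hFpc w hwpc] at hw
      injection hw with hx
      subst hx
      exact ⟨(hpend w hwpc).1, hlow_le w hwpc, hle_high w hwpc⟩
    · rw [hFnot w hwpc] at hw
      obtain ⟨h1, h2⟩ := hinv.finb w x hw
      exact ⟨Set.mem_insert_of_mem _ h1, h2⟩
  · intro w x hw e' he'
    replace hw : F w = some x := hw
    by_cases hwpc : w ∈ pc
    · rw [hFpc w hwpc] at hw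
      injection hw with hx
      subst hx
      exact (her e' he').key_le
    · rw [hFnot w hwpc] at hw
      exact hinv.finfut w x hw e' (List.mem_cons_of_mem _ he')
  · intro u hu
    exact List.mem_append_left _ (hinv.proxmem u hu)
  · intro w hw
    show (F w).isSome = true
    rcases List.mem_append.1 hw with hw | hw
    · have h1 := hinv.highdone w hw
      rw [Option.isSome_iff_exists] at h1
      obtain ⟨x, hx⟩ := h1
      rw [hFnot w (holdnot w x hx), hx]
      rfl
    · simp at hw
  · -- no pending node adjacent to a finalized one
    intro a b hadj hpa hb
    obtain ⟨ha1, ha2⟩ : a ∈ insert v st.discovered ∧ F a = none := hpa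
    replace hb : (F b).isSome = true := hb
    have hanpc : a ∉ pc := by
      intro h
      rw [hFpc a h] at ha2
      exact nomatch ha2
    have ha2' : st.final a = none := by rwa [hFnot a hanpc] at ha2
    have hpa1 : pendingS st1 a := ⟨ha1, ha2'⟩
    by_cases hbpc : b ∈ pc
    · exact hanpc (Relation.ReflTransGen.tail hbpc ⟨T.adj_symm a b hadj, hpend b hbpc, hpa1⟩)
    · rw [hFnot b hbpc] at hb
      rcases Set.mem_insert_iff.1 ha1 with rfl | ha1'
      · exact hanpc Relation.ReflTransGen.refl
      · exact hinv.nopf a b hadj ⟨ha1', ha2'⟩ hb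
  · -- batches
    obtain ⟨Bs, hiso, hval, hconn, hgood⟩ := hinv.batches
    refine ⟨(pc, T.low v) :: Bs, ?_, ?_, ?_, ?_⟩
    · intro w
      show (F w).isSome = true ↔ _
      constructor
      · intro hw
        by_cases hwpc : w ∈ pc
        · exact ⟨(pc, T.low v), List.mem_cons_self, hwpc⟩
        · rw [hFnot w hwpc] at hw
          obtain ⟨b, hb, hwb⟩ := (hiso w).1 hw
          exact ⟨b, List.mem_cons_of_mem _ hb, hwb⟩
      · rintro ⟨b, hb, hwb⟩
        rcases List.mem_cons.1 hb with rfl | hb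
        · rw [hFpc w hwb]; rfl
        · have h2 := hval b hb w hwb
          rw [hFnot w (holdnot w b.2 h2), h2]; rfl
    · intro b hb w hwb
      show F w = some b.2
      rcases List.mem_cons.1 hb with rfl | hb
      · exact hFpc w hwb
      · have h2 := hval b hb w hwb
        rw [hFnot w (holdnot w b.2 h2)]
        exact h2
    · intro b hb
      rcases List.mem_cons.1 hb with rfl | hb
      · exact ⟨v, Relation.ReflTransGen.refl, pendComp_conn⟩
      · exact hconn b hb
    · refine ⟨?_, hgood⟩
      obtain ⟨u, hadj, hu⟩ := hbr
      rw [Option.isSome_iff_exists] at hu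
      obtain ⟨x, hx⟩ := hu
      obtain ⟨b', hb', hub'⟩ := (hiso u).1 (by simp [hx])
      refine Or.inr ⟨u, v, holdnot u x hx, Relation.ReflTransGen.refl,
        T.adj_symm v u hadj, b', hb', hub', ?_⟩
      have h2 := hval b' hb' u hub'
      rw [hx] at h2
      injection h2 with hx'
      rw [← hx']
      exact hinv.finfut u x hx (v, false) (List.mem_cons_self)

end ImpTerrain
end Lemmas4c
section Lemmas4d
namespace ImpTerrain
variable {V : Type} [Fintype V] [DecidableEq V] {T : ImpTerrain V}

lemma inv_high_report (hle : ∀ v, T.low v ≤ T.high v)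
    {p rest : List (V × Bool)} {st : SweepState V} {v : V}
    (hinv : Inv T p ((v, true) :: rest) st)
    (hpe : ∀ e' ∈ p, Ord T e' (v, true))
    (her : ∀ e'' ∈ rest, Ord T (v, true) e'')
    (hall : ∀ a : V, ∀ b : Bool, (a, b) ∈ p ∨ (a, b) = (v, true) ∨ (a, b) ∈ rest)
    (hbr : ¬ (st.final v).isSome = true) :
    Inv T (p ++ [(v, true)]) rest (T.sweepStep st (v, true)) := by
  set pc := T.pendComp st v with hpc
  set x := sSup (T.low '' pc) with hx
  set F : V → Option ℝ := fun w => if w ∈ pc then some x else st.final w with hF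
  have hstep : T.sweepStep st (v, true) = ⟨st.discovered, F, insert v st.proxies⟩ := by
    simp only [sweepStep]; rw [if_neg hbr]
  rw [hstep]
  have hvnone : st.final v = none := by
    cases hfv : st.final v with
    | none => rfl
    | some y => rw [hfv] at hbr; simp at hbr
  -- v was discovered
  have hvFp : (v, false) ∈ p := by
    rcases hall v false with h | h | h
    · exact h
    · simp at h
    · exact absurd ((her (v, false) h).TF) (not_lt.2 (hle v))
  have hpendv : pendingS st v := ⟨(hinv.disc v).2 hvFp, hvnone⟩
  have hpend : ∀ w ∈ pc, pendingS st w := pend_mem hpendv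
  have hlowpc : ∀ w ∈ pc, T.low w ≤ T.high v := by
    intro w hw
    exact (hpe (w, false) ((hinv.disc w).1 (hpend w hw).1)).key_le
  have hhighpc : ∀ w ∈ pc, T.high v ≤ T.high w := by
    intro w hw
    have hnone : st.final w = none := (hpend w hw).2
    have hT : (w, true) ∉ p := by
      intro hT
      have := hinv.highdone w hT
      rw [hnone] at this
      simp at this
    rcases hall w true with h' | h' | h'
    · exact absurd h' hT
    · simp only [Prod.mk.injEq, and_true] at h'
      subst h'
      exact le_refl _
    · exact (her (w, true) h').key_le
  -- the pending component equals the elevation component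
  have hcompeq : pc = T.comp (T.high v) v := by
    apply Set.eq_of_subset_of_subset
    · intro w hw
      induction hw with
      | refl => exact comp_refl _ _
      | @tail b c hab hbc ih =>
        exact Relation.ReflTransGen.tail ih
          ⟨hbc.1, hlowpc b hab, hlowpc c (Relation.ReflTransGen.tail hab hbc)⟩
    · intro w hw
      have : ∀ u ∈ T.comp (T.high v) v, u ∈ pc := by
        intro u hu
        induction hu with
        | refl => exact Relation.ReflTransGen.refl
        | @tail b c hab hbc ih =>
          have hbpc : b ∈ pc := ih
          have hbpend : pendingS st b := hpend b hbpc
          have hcd : c ∈ st.discovered := by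
            apply (hinv.disc c).2
            rcases hall c false with h | h | h
            · exact h
            · simp at h
            · exact absurd ((her (c, false) h).TF) (not_lt.2 hbc.2.2)
          have hcnone : st.final c = none := by
            cases hfc : st.final c with
            | none => rfl
            | some y =>
              exact absurd (hinv.nopf b c hbc.1 hbpend (by rw [hfc]; rfl)) not_false
          exact Relation.ReflTransGen.tail hbpc ⟨hbc.1, hbpend, ⟨hcd, hcnone⟩⟩
      exact this w hw
  -- bounds on the supremum
  have hpcne : (T.low '' pc).Nonempty := ⟨T.low v, v, Relation.ReflTransGen.refl, rfl⟩
  have hxle : x ≤ T.high v := by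
    apply csSup_le hpcne
    rintro _ ⟨w, hw, rfl⟩
    exact hlowpc w hw
  have hlex : ∀ w ∈ pc, T.low w ≤ x := by
    intro w hw
    exact le_csSup ((Set.toFinite pc).image T.low).bddAbove ⟨w, hw, rfl⟩
  have hFpc : ∀ w ∈ pc, F w = some x := fun w hw => if_pos hw
  have hFnot : ∀ w, w ∉ pc → F w = st.final w := fun w hw => if_neg hw
  have holdnot : ∀ w y, st.final w = some y → w ∉ pc := by
    intro w y hw hwpc
    rw [(hpend w hwpc).2] at hw
    exact nomatch hw
  -- no old proxy lies in the new component
  have holdprox : ∀ u ∈ st.proxies, u ∉ pc := by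
    intro u hu hupc
    have h1 := hinv.highdone u (hinv.proxmem u hu)
    rw [(hpend u hupc).2] at h1
    simp at h1
  refine ⟨?_, ?_, ?_, ?_, ?_, ?_, ?_, ?_, ?_⟩
  · intro w
    rw [hinv.disc w]
    simp
  · intro w y hw
    replace hw : F w = some y := hw
    show w ∈ st.discovered ∧ _
    by_cases hwpc : w ∈ pc
    · rw [hFpc w hwpc] at hw
      injection hw with hy
      subst hy
      exact ⟨(hpend w hwpc).1, hlex w hwpc, hxle.trans (hhighpc w hwpc)⟩
    · rw [hFnot w hwpc] at hw
      exact hinv.finb w y hw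
  · intro w y hw e' he'
    replace hw : F w = some y := hw
    by_cases hwpc : w ∈ pc
    · rw [hFpc w hwpc] at hw
      injection hw with hy
      subst hy
      exact hxle.trans (her e' he').key_le
    · rw [hFnot w hwpc] at hw
      exact hinv.finfut w y hw e' (List.mem_cons_of_mem _ he')
  · intro u hu
    rcases Set.mem_insert_iff.1 hu with rfl | hu
    · exact List.mem_append_right _ (List.mem_singleton_self _)
    · exact List.mem_append_left _ (hinv.proxmem u hu)
  · intro w hw
    show (F w).isSome = true
    rcases List.mem_append.1 hw with hw | hw
    · have h1 := hinv.highdone w hw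
      rw [Option.isSome_iff_exists] at h1
      obtain ⟨y, hy⟩ := h1
      rw [hFnot w (holdnot w y hy), hy]
      rfl
    · simp only [List.mem_singleton, Prod.mk.injEq, and_true] at hw
      subst hw
      rw [hFpc w Relation.ReflTransGen.refl]
      rfl
  · intro a b hadj hpa hb
    obtain ⟨ha1, ha2⟩ : a ∈ st.discovered ∧ F a = none := hpa
    replace hb : (F b).isSome = true := hb
    have hanpc : a ∉ pc := by
      intro h
      rw [hFpc a h] at ha2
      exact nomatch ha2
    have ha2' : st.final a = none := by rwa [hFnot a hanpc] at ha2
    have hpa1 : pendingS st a := ⟨ha1, ha2'⟩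
    by_cases hbpc : b ∈ pc
    · exact hanpc (Relation.ReflTransGen.tail hbpc ⟨T.adj_symm a b hadj, hpend b hbpc, hpa1⟩)
    · rw [hFnot b hbpc] at hb
      exact hinv.nopf a b hadj hpa1 hb
  · -- proxhigh
    intro u hu w hw
    rcases Set.mem_insert_iff.1 hu with rfl | hu
    · exact hhighpc w (hcompeq ▸ hw)
    · exact hinv.proxhigh u hu w hw
  · -- proxuniq
    intro c hc u hu huc
    have hc' : c = v ∨ c ∈ st.proxies := Set.mem_insert_iff.1 hc
    have hu' : u = v ∨ u ∈ st.proxies := Set.mem_insert_iff.1 hu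
    rcases hc' with hcv | hcold
    · subst hcv
      rcases hu' with huv | huold
      · exact huv
      · exact absurd (hcompeq ▸ huc : u ∈ pc) (holdprox u huold)
    · rcases hu' with huv | huold
      · subst huv
        exfalso
        have huT : (c, true) ∈ p := hinv.proxmem c hcold
        have hkey : T.high c ≤ T.high u := (hpe (c, true) huT).key_le
        have hmem : c ∈ T.comp (T.high u) u := comp_mono hkey (comp_symm huc)
        exact holdprox c hcold (hcompeq ▸ hmem)
      · exact hinv.proxuniq c hcold u huold huc
  · -- batches
    obtain ⟨Bs, hiso, hval, hconn, hgood⟩ := hinv.batches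
    refine ⟨(pc, x) :: Bs, ?_, ?_, ?_, ?_⟩
    · intro w
      show (F w).isSome = true ↔ _
      constructor
      · intro hw
        by_cases hwpc : w ∈ pc
        · exact ⟨(pc, x), List.mem_cons_self, hwpc⟩
        · rw [hFnot w hwpc] at hw
          obtain ⟨b, hb, hwb⟩ := (hiso w).1 hw
          exact ⟨b, List.mem_cons_of_mem _ hb, hwb⟩
      · rintro ⟨b, hb, hwb⟩
        rcases List.mem_cons.1 hb with rfl | hb
        · rw [hFpc w hwb]; rfl
        · have h2 := hval b hb w hwb
          rw [hFnot w (holdnot w b.2 h2), h2]; rfl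
    · intro b hb w hwb
      show F w = some b.2
      rcases List.mem_cons.1 hb with rfl | hb
      · exact hFpc w hwb
      · have h2 := hval b hb w hwb
        rw [hFnot w (holdnot w b.2 h2)]
        exact h2
    · intro b hb
      rcases List.mem_cons.1 hb with rfl | hb
      · exact ⟨v, Relation.ReflTransGen.refl, pendComp_conn⟩
      · exact hconn b hb
    · exact ⟨Or.inl ⟨v, Set.mem_insert _ _, hcompeq⟩,
        hgood.mono (Set.subset_insert _ _)⟩

end ImpTerrain
end Lemmas4d
section Lemmas5
namespace ImpTerrain
variable {V : Type} [Fintype V] [DecidableEq V] {T : ImpTerrain V}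

lemma run_inv (hle : ∀ v, T.low v ≤ T.high v) {evs : List (V × Bool)}
    (hevs : T.ValidEventList evs) :
    ∀ (rest p : List (V × Bool)) (st : SweepState V), evs = p ++ rest →
      Inv T p rest st → Inv T evs [] (List.foldl T.sweepStep st rest) := by
  intro rest
  induction rest with
  | nil =>
    intro p st hsplit hinv
    rw [hsplit, List.append_nil]
    exact hinv
  | cons e rest' ih =>
    intro p st hsplit hinv
    obtain ⟨hpe, her, hnotp, hall⟩ := split_facts hevs hsplit
    have hstep : Inv T (p ++ [e]) rest' (T.sweepStep st e) := by
      obtain ⟨v, b⟩ := e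
      cases b with
      | false =>
        by_cases hbr : ∃ u, T.adj v u ∧ (st.final u).isSome = true
        · exact inv_low_drain hle hinv hpe her hnotp hall hbr
        · exact inv_low_quiet hinv hnotp hbr
      | true =>
        by_cases hbr : (st.final v).isSome = true
        · exact inv_high_skip hinv hbr
        · exact inv_high_report hle hinv hpe her hall hbr
    have hsplit' : evs = (p ++ [e]) ++ rest' := by
      rw [hsplit, List.append_assoc]
      rfl
    have := ih (p ++ [e]) (T.sweepStep st e) hsplit' hstep
    rwa [List.foldl_cons]

lemma init_inv (evs : List (V × Bool)) :
    Inv T [] evs ⟨∅, fun _ => none, ∅⟩ := by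
  refine ⟨?_, ?_, ?_, ?_, ?_, ?_, ?_, ?_, ⟨[], ?_, ?_, ?_, trivial⟩⟩
  · intro w; simp
  · intro w x hw; exact nomatch hw
  · intro w x hw; exact nomatch hw
  · intro u hu; exact absurd hu (Set.notMem_empty u)
  · intro w hw; simp at hw
  · intro a b _ _ hb; simp at hb
  · intro v hv; exact absurd hv (Set.notMem_empty v)
  · intro v hv; exact absurd hv (Set.notMem_empty v)
  · intro w; simp
  · intro b hb; simp at hb
  · intro b hb; simp at hb

/-- The invariant at the end of the sweep. -/
lemma final_inv (hle : ∀ v, T.low v ≤ T.high v) {evs : List (V × Bool)}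
    (hevs : T.ValidEventList evs) : Inv T evs [] (T.sweepRun evs) :=
  run_inv hle hevs evs [] _ rfl (init_inv evs)

/-- Every node is finalized at the end of the sweep. -/
lemma final_all (hle : ∀ v, T.low v ≤ T.high v) {evs : List (V × Bool)}
    (hevs : T.ValidEventList evs) (w : V) :
    ∃ y, ((T.sweepRun evs).final w) = some y := by
  have h := (final_inv hle hevs).highdone w (hevs.1 w true)
  rwa [Option.isSome_iff_exists] at h

lemma sweepM_isRealization (hle : ∀ v, T.low v ≤ T.high v) {evs : List (V × Bool)}
    (hevs : T.ValidEventList evs) : T.IsRealization (T.sweepM evs) := by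
  intro w
  obtain ⟨y, hy⟩ := final_all hle hevs w
  have hb := (final_inv hle hevs).finb w y hy
  simp only [sweepM, hy, Option.getD_some]
  exact hb.2

/-- Any set containing a local minimum in every realization contains a
reported component. -/
lemma alwaysMin_contains_comp (hle : ∀ v, T.low v ≤ T.high v) {evs : List (V × Bool)}
    (hevs : T.ValidEventList evs) {S : Set V} (hAM : T.AlwaysMin S) :
    ∃ v ∈ (T.sweepRun evs).proxies, T.comp (T.high v) v ⊆ S := by
  set M := T.sweepM evs with hM
  obtain ⟨P, hP, hPS⟩ := hAM M (sweepM_isRealization hle hevs)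
  obtain ⟨Bs, hiso, hval, hconn, hgood⟩ := (final_inv hle hevs).batches
  obtain ⟨p₀, hp₀⟩ := hP.1
  obtain ⟨y, hy⟩ := final_all hle hevs p₀
  obtain ⟨b, hb, hp₀b⟩ := (hiso p₀).1 (by rw [hy]; rfl)
  have hvalM : ∀ b ∈ Bs, ∀ w ∈ b.1, M w = b.2 := by
    intro b hb w hw
    have := hval b hb w hw
    simp only [hM, sweepM, this, Option.getD_some]
  obtain ⟨v, hv, hsub⟩ := batch_descent Bs hgood hvalM hconn P hP ⟨b, hb, p₀, hp₀b, hp₀⟩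
  exact ⟨v, hv, hsub.trans hPS⟩

end ImpTerrain
end Lemmas5
/-- The sweep-plane minimum-removal algorithm reports exactly one proxy of each
imprecise minimum: every reported node is a proxy of some imprecise minimum,
and every imprecise minimum has exactly one reported proxy. -/
theorem stmt18 {V : Type} [Fintype V] [DecidableEq V] (T : ImpTerrain V)
    (hle : ∀ v, T.low v ≤ T.high v)
    (evs : List (V × Bool)) (hevs : T.ValidEventList evs) :
    (∀ v ∈ (T.sweepRun evs).proxies, ∃ S, T.ImpreciseMin S ∧ T.IsProxy S v) ∧
      ∀ S, T.ImpreciseMin S →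
        ∃! v, v ∈ (T.sweepRun evs).proxies ∧ v ∈ S ∧ T.IsProxy S v := by
  have hinv := ImpTerrain.final_inv hle hevs
  constructor
  · intro v hv
    exact ⟨T.comp (T.high v) v,
      ImpTerrain.impreciseMin_comp hle v (hinv.proxhigh v hv),
      ImpTerrain.isProxy_comp hle v⟩
  · intro S hS
    obtain ⟨v, hv, hsub⟩ := ImpTerrain.alwaysMin_contains_comp hle hevs hS.1
    have hSeq : S = T.comp (T.high v) v := by
      by_contra hne
      exact hS.2 (T.comp (T.high v) v) (Set.ssubset_iff_subset_ne.2 ⟨hsub, Ne.symm hne⟩)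
        (ImpTerrain.alwaysMin_comp hle v)
    refine ⟨v, ⟨hv, ?_, ?_⟩, ?_⟩
    · rw [hSeq]; exact ImpTerrain.comp_refl _ _
    · rw [hSeq]; exact ImpTerrain.isProxy_comp hle v
    · rintro u ⟨hu1, hu2, _⟩
      exact hinv.proxuniq v hv u hu1 (hSeq ▸ hu2)
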